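/- Let C ⊆ ℤ[i] be a set of cardinality n+1. Then C is an n-universal set if and only if for every prime element p of ℤ[i] and every positive integer k, the set C is almost uniformly distributed modulo p^k. -/

import Mathlib

open Polynomial

/-- The fraction field of the Gaussian integers. -/
abbrev FF : Type := FractionRing GaussianInt

/-- The canonical embedding of `ℤ[i]` into its fraction field. -/
noncomputable def ι : GaussianInt →+* FF := algebraMap GaussianInt FF

/-- A polynomial with coefficients in the fraction field of `ℤ[i]` is integer-valued
if it takes values in (the image of) `ℤ[i]` at every Gaussian integer. -/
def IntegerValued (f : FF[X]) : Prop :=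
  ∀ z : GaussianInt, f.eval (ι z) ∈ Set.range ι

/-- A set `M ⊆ ℤ[i]` is `n`-universal if every polynomial of degree at most `n`
with coefficients in the fraction field of `ℤ[i]` taking integer values on `M`
is integer-valued. -/
def IsNUniversal (n : ℕ) (M : Set GaussianInt) : Prop :=
  ∀ f : FF[X], f.natDegree ≤ n → (∀ c ∈ M, f.eval (ι c) ∈ Set.range ι) → IntegerValued f

/-- `M(r mod α)`: the elements of `M` congruent to `r` modulo `α`. -/
def ResidueSet (M : Finset GaussianInt) (α r : GaussianInt) : Set GaussianInt :=
  (M : Set GaussianInt) ∩ {z | α ∣ z - r}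

/-- A finite set `M ⊆ ℤ[i]` is almost uniformly distributed modulo `α` if the
cardinalities of any two residue classes of `M` modulo `α` are equal or differ by one. -/
def AlmostUnifDist (M : Finset GaussianInt) (α : GaussianInt) : Prop :=
  ∀ r s : GaussianInt,
    (ResidueSet M α r).ncard = (ResidueSet M α s).ncard ∨
    (ResidueSet M α r).ncard + 1 = (ResidueSet M α s).ncard ∨
    (ResidueSet M α s).ncard + 1 = (ResidueSet M α r).ncard




open scoped Classical

noncomputable section


lemma iota_inj : Function.Injective ι := IsFractionRing.injective GaussianInt FF

noncomputable def LD (C : Finset GaussianInt) (c : GaussianInt) : GaussianInt :=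
  ∏ d ∈ C.erase c, (c - d)
noncomputable def LP (C : Finset GaussianInt) (c z : GaussianInt) : GaussianInt :=
  ∏ d ∈ C.erase c, (z - d)

lemma LD_ne_zero {C : Finset GaussianInt} {c : GaussianInt} : LD C c ≠ 0 := by
  rw [LD, Finset.prod_ne_zero_iff]
  intro d hd
  have := Finset.ne_of_mem_erase hd
  intro h
  exact this (by linear_combination -h)

lemma key_eval (C : Finset GaussianInt) (c z : GaussianInt) (hc : c ∈ C) :
    ι (LD C c) * eval (ι z) (Lagrange.basis C (fun x => ι x) c) = ι (LP C c z) := by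
  rw [LD, LP, Lagrange.basis, eval_prod, map_prod, map_prod, ← Finset.prod_mul_distrib]
  refine Finset.prod_congr rfl fun d hd => ?_
  have hne : ι c - ι d ≠ 0 := by
    rw [sub_ne_zero]
    exact fun h => Finset.ne_of_mem_erase hd (iota_inj h).symm
  rw [Lagrange.basisDivisor, eval_mul, eval_C, eval_sub, eval_X, eval_C, map_sub, map_sub]
  field_simp

lemma universal_iff_dvd (n : ℕ) (C : Finset GaussianInt) (hcard : C.card = n + 1) :
    IsNUniversal n (C : Set GaussianInt) ↔ ∀ c ∈ C, ∀ z : GaussianInt, LD C c ∣ LP C c z := by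
  have hinj : Set.InjOn (fun x => ι x) (C : Set GaussianInt) := fun a _ b _ h => iota_inj h
  constructor
  · intro hU c hc z
    have hdeg : (Lagrange.basis C (fun x => ι x) c).natDegree ≤ n := by
      rw [Lagrange.natDegree_basis hinj hc, hcard]; omega
    have hvals : ∀ d ∈ (C : Set GaussianInt),
        (Lagrange.basis C (fun x => ι x) c).eval (ι d) ∈ Set.range ι := by
      intro d hd
      rcases eq_or_ne c d with rfl | hne
      · rw [Lagrange.eval_basis_self hinj hc]; exact ⟨1, map_one ι⟩
      · rw [Lagrange.eval_basis_of_ne hne hd]; exact ⟨0, map_zero ι⟩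
    obtain ⟨w, hw⟩ := hU _ hdeg hvals z
    refine ⟨w, iota_inj ?_⟩
    rw [map_mul, ← key_eval C c z hc, hw]
  · intro hdvd f hdeg hvals z
    have hdlt : f.degree < (C.card : ℕ∞) := by
      calc f.degree ≤ (f.natDegree : WithBot ℕ) := degree_le_natDegree
        _ < (C.card : WithBot ℕ) := by
            exact_mod_cast lt_of_le_of_lt (Nat.cast_le.mpr hdeg) (by rw [hcard]; exact_mod_cast Nat.lt_succ_self n)
    have hf := Lagrange.eq_interpolate hinj hdlt
    choose a ha using fun c (hc : c ∈ C) => hvals c hc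
    choose w hw using fun c (hc : c ∈ C) => hdvd c hc z
    have : f.eval (ι z) = ι (∑ c ∈ C.attach, a c.1 c.2 * w c.1 c.2) := by
      conv_lhs => rw [hf, Lagrange.interpolate_apply]
      rw [eval_finset_sum, map_sum,
        ← Finset.sum_attach C (fun c => eval (ι z) (Polynomial.C (eval (ι c) f) * Lagrange.basis C (fun x => ι x) c))]
      refine Finset.sum_congr rfl fun c _ => ?_
      rw [eval_mul, eval_C, ← ha c.1 c.2, map_mul]
      congr 1
      have h1 := key_eval C c.1 z c.2
      rw [hw c.1 c.2, map_mul] at h1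
      exact mul_left_cancel₀ (fun h => LD_ne_zero (iota_inj (h.trans (map_zero ι).symm))) h1
    exact ⟨_, this.symm⟩

open UniqueFactorizationMonoid in
lemma dvd_of_forall_emultiplicity_le {a b : GaussianInt} (ha : a ≠ 0) (hb : b ≠ 0)
    (h : ∀ q : GaussianInt, Prime q → emultiplicity q a ≤ emultiplicity q b) : a ∣ b := by
  classical
  letI : NormalizationMonoid GaussianInt := UniqueFactorizationMonoid.strongNormalizationMonoid.toNormalizationMonoid
  rw [dvd_iff_normalizedFactors_le_normalizedFactors ha hb, Multiset.le_iff_count]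
  intro x
  by_cases hx : x ∈ normalizedFactors a
  · have hpx := prime_of_normalized_factor x hx
    have hnx : normalize x = x := normalize_normalized_factor x hx
    have h1 := emultiplicity_eq_count_normalizedFactors hpx.irreducible ha
    have h2 := emultiplicity_eq_count_normalizedFactors hpx.irreducible hb
    rw [hnx] at h1 h2
    have := h x hpx
    rw [h1, h2] at this
    exact_mod_cast this
  · simp [Multiset.count_eq_zero_of_notMem hx]

lemma emult_eq_card_filter {p e : GaussianInt} (hp : Prime p) (he : e ≠ 0) {L : ℕ}
    (hL : ¬ p ^ L ∣ e) :
    emultiplicity p e = (((Finset.Icc 1 L).filter (fun m => p ^ m ∣ e)).card : ℕ∞) := by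
  have hfin : FiniteMultiplicity p e := FiniteMultiplicity.of_not_isUnit hp.not_unit he
  rw [hfin.emultiplicity_eq_multiplicity, Nat.cast_inj]
  set m := multiplicity p e with hm
  have hdvd : ∀ k : ℕ, p ^ k ∣ e ↔ k ≤ m := fun k => hfin.pow_dvd_iff_le_multiplicity
  have hmL : m < L := by
    by_contra hc
    exact hL ((hdvd L).mpr (le_of_not_gt hc))
  have : (Finset.Icc 1 L).filter (fun k => p ^ k ∣ e) = Finset.Icc 1 m := by
    ext k
    simp only [Finset.mem_filter, Finset.mem_Icc, hdvd]
    omega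
  rw [this, Nat.card_Icc]
  omega

lemma dvd_sub_trans {a x y z : GaussianInt} (h1 : a ∣ x - y) (h2 : a ∣ y - z) : a ∣ x - z := by
  have : x - z = (x - y) + (y - z) := by ring
  rw [this]; exact dvd_add h1 h2

lemma dvd_sub_congr {a z c x : GaussianInt} (h : a ∣ z - c) : a ∣ x - z ↔ a ∣ x - c :=
  ⟨fun hx => dvd_sub_trans hx h, fun hx => dvd_sub_trans hx (dvd_sub_comm.mp h)⟩

def cnt (C : Finset GaussianInt) (p : GaussianInt) (k : ℕ) (r : GaussianInt) : ℕ :=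
  (C.filter fun x => p ^ k ∣ x - r).card

variable {C : Finset GaussianInt} {p : GaussianInt}

lemma cnt_congr {k : ℕ} {r r' : GaussianInt} (h : p ^ k ∣ r' - r) :
    cnt C p k r = cnt C p k r' := by
  unfold cnt
  congr 1
  exact Finset.filter_congr fun x _ => by
    simpa using (dvd_sub_congr (a := p ^ k) (x := x) h).symm

lemma cnt_anti {k m : ℕ} (hkm : k ≤ m) (r : GaussianInt) : cnt C p m r ≤ cnt C p k r := by
  apply Finset.card_le_card
  intro x hx
  simp only [cnt, Finset.mem_filter] at *
  exact ⟨hx.1, (pow_dvd_pow p hkm).trans hx.2⟩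

lemma one_le_cnt {k : ℕ} {c : GaussianInt} (hc : c ∈ C) : 1 ≤ cnt C p k c :=
  Finset.card_pos.mpr ⟨c, Finset.mem_filter.mpr ⟨hc, by simp⟩⟩

lemma card_erase_filter {k : ℕ} {c : GaussianInt} (hc : c ∈ C) :
    ((C.erase c).filter fun x => p ^ k ∣ x - c).card + 1 = cnt C p k c := by
  rw [cnt, Finset.filter_erase, Finset.card_erase_of_mem (Finset.mem_filter.mpr ⟨hc, by simp⟩)]
  have : 1 ≤ (C.filter fun x => p ^ k ∣ x - c).card :=
    Finset.card_pos.mpr ⟨c, Finset.mem_filter.mpr ⟨hc, by simp⟩⟩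
  omega

lemma card_erase_filter_le {k : ℕ} {c z : GaussianInt} :
    ((C.erase c).filter fun x => p ^ k ∣ x - z).card ≤ cnt C p k z :=
  Finset.card_le_card (by
    intro x hx
    simp only [Finset.mem_filter, Finset.mem_erase] at hx ⊢
    exact ⟨hx.1.2, hx.2⟩)

lemma card_erase_filter_eq_of_not_dvd {k : ℕ} {c z : GaussianInt} (h : ¬ p ^ k ∣ z - c) :
    ((C.erase c).filter fun x => p ^ k ∣ x - z).card = cnt C p k z := by
  rw [cnt, Finset.filter_erase, Finset.erase_eq_of_notMem]
  intro hmem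
  rw [Finset.mem_filter] at hmem
  exact h (dvd_sub_comm.mp hmem.2)

lemma card_erase_filter_eq_of_dvd {k : ℕ} {c z : GaussianInt} (hc : c ∈ C) (h : p ^ k ∣ z - c) :
    ((C.erase c).filter fun x => p ^ k ∣ x - z).card + 1 = cnt C p k c := by
  rw [← card_erase_filter (p := p) (k := k) hc]
  congr 2
  exact Finset.filter_congr fun x _ => by simpa using dvd_sub_congr (x := x) h

lemma cnt_le_one_of_sep {L : ℕ} {r : GaussianInt}
    (hL : ∀ x ∈ C, ∀ y ∈ C, x ≠ y → ¬ p ^ L ∣ x - y) {m : ℕ} (hm : L ≤ m) :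
    cnt C p m r ≤ 1 := by
  rw [cnt, Finset.card_le_one]
  intro a ha b hb
  rw [Finset.mem_filter] at ha hb
  by_contra hne
  exact hL a ha.1 b hb.1 hne
    ((pow_dvd_pow p hm).trans (dvd_sub_trans ha.2 (dvd_sub_comm.mp hb.2)))

noncomputable def gaussBasis : Module.Basis (Fin 2) ℤ GaussianInt :=
  Module.Basis.ofEquivFun
  { toFun := fun z => ![z.re, z.im]
    map_add' := by intro x y; funext i; fin_cases i <;> simp [Zsqrtd.re_add, Zsqrtd.im_add]
    map_smul' := by intro c x; funext i; fin_cases i <;> simp [Zsqrtd.re_smul, Zsqrtd.im_smul]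
    invFun := fun f => ⟨f 0, f 1⟩
    left_inv := by intro z; simp
    right_inv := by intro f; funext i; fin_cases i <;> simp }

instance : Module.Free ℤ GaussianInt := Module.Free.of_basis gaussBasis
instance : Module.Finite ℤ GaussianInt := Module.Finite.of_basis gaussBasis

lemma exists_transversal {p : GaussianInt} (hp : Prime p) :
    ∃ Ts : Finset GaussianInt, 2 ≤ Ts.card ∧
      (∀ u : GaussianInt, ∃ t ∈ Ts, p ∣ u - t) ∧
      (∀ t ∈ Ts, ∀ t' ∈ Ts, p ∣ t - t' → t = t') := by
  have hne : Ideal.span ({p} : Set GaussianInt) ≠ ⊥ := by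
    simpa [Ideal.span_singleton_eq_bot] using hp.ne_zero
  letI : Fintype (GaussianInt ⧸ Ideal.span ({p} : Set GaussianInt)) :=
    @Fintype.ofFinite _ (Ideal.finiteQuotientOfFreeOfNeBot _ hne)
  have hmkout : ∀ x : GaussianInt ⧸ Ideal.span ({p} : Set GaussianInt),
      Ideal.Quotient.mk _ x.out = x := fun x => Quotient.out_eq' x
  have hout : Function.Injective
      (fun x : GaussianInt ⧸ Ideal.span ({p} : Set GaussianInt) => x.out) := by
    intro a b h
    have := congrArg (Ideal.Quotient.mk (Ideal.span ({p} : Set GaussianInt))) h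
    simp only at this
    rwa [hmkout, hmkout] at this
  refine ⟨Finset.univ.image (fun x : GaussianInt ⧸ Ideal.span ({p} : Set GaussianInt) => x.out),
    ?_, ?_, ?_⟩
  · rw [Finset.card_image_of_injective _ hout, Finset.card_univ]
    have : Ideal.span ({p} : Set GaussianInt) ≠ ⊤ := by
      simpa [Ideal.span_singleton_eq_top] using hp.not_unit
    haveI := Ideal.Quotient.nontrivial_iff.mpr this
    exact Fintype.one_lt_card
  · intro u
    refine ⟨(Ideal.Quotient.mk _ u).out, Finset.mem_image_of_mem _ (Finset.mem_univ _), ?_⟩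
    rw [← Ideal.mem_span_singleton, ← Ideal.Quotient.eq, hmkout]
  · intro t ht t' ht' hdvd
    simp only [Finset.mem_image] at ht ht'
    obtain ⟨a, -, rfl⟩ := ht
    obtain ⟨b, -, rfl⟩ := ht'
    have : a = b := by
      rw [← hmkout a, ← hmkout b]
      exact Ideal.Quotient.eq.mpr (Ideal.mem_span_singleton.mpr hdvd)
    rw [this]





variable {C : Finset GaussianInt} {p : GaussianInt}

lemma cnt_partition (hp : p ≠ 0) {Ts : Finset GaussianInt}
    (hrep : ∀ u : GaussianInt, ∃ t ∈ Ts, p ∣ u - t)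
    (hsep : ∀ t ∈ Ts, ∀ t' ∈ Ts, p ∣ t - t' → t = t')
    (m : ℕ) (r : GaussianInt) :
    cnt C p m r = ∑ t ∈ Ts, cnt C p (m + 1) (r + p ^ m * t) := by
  unfold cnt
  rw [← Finset.card_biUnion]
  · congr 1
    ext x
    simp only [Finset.mem_biUnion, Finset.mem_filter]
    constructor
    · rintro ⟨hxC, u, hu⟩
      obtain ⟨t, ht, v, hv⟩ := hrep u
      refine ⟨t, ht, hxC, v, ?_⟩
      have : x - (r + p ^ m * t) = p ^ m * (u - t) := by rw [mul_sub, ← hu]; ring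
      rw [this, hv, pow_succ]; ring
    · rintro ⟨t, ht, hxC, hdvd⟩
      refine ⟨hxC, ?_⟩
      have : x - r = (x - (r + p ^ m * t)) + p ^ m * t := by ring
      rw [this]
      exact dvd_add ((pow_dvd_pow p (Nat.le_succ m)).trans hdvd) (Dvd.intro _ rfl)
  · intro t ht t' ht' hne
    simp only [Finset.disjoint_left, Finset.mem_filter]
    rintro x ⟨-, h1⟩ ⟨-, h2⟩
    apply hne
    apply hsep t ht t' ht'
    have h3 : p ^ (m + 1) ∣ p ^ m * (t' - t) := by
      have : p ^ m * (t' - t) = (x - (r + p ^ m * t)) - (x - (r + p ^ m * t')) := by ring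
      rw [this]; exact dvd_sub h1 h2
    rw [pow_succ] at h3
    exact dvd_sub_comm.mp ((mul_dvd_mul_iff_left (pow_ne_zero m hp)).mp h3)

lemma exists_sub_max (hp : p ≠ 0) {Ts : Finset GaussianInt}
    (hrep : ∀ u : GaussianInt, ∃ t ∈ Ts, p ∣ u - t)
    (hsep : ∀ t ∈ Ts, ∀ t' ∈ Ts, p ∣ t - t' → t = t')
    (hTs : 2 ≤ Ts.card) (m : ℕ) (r : GaussianInt) :
    ∃ t ∈ Ts, cnt C p m r ≤ Ts.card * cnt C p (m + 1) (r + p ^ m * t) := by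
  have h := cnt_partition (C := C) hp hrep hsep m r
  by_contra hc
  push_neg at hc
  have : ∑ t ∈ Ts, Ts.card * cnt C p (m + 1) (r + p ^ m * t) < ∑ t ∈ Ts, cnt C p m r :=
    Finset.sum_lt_sum_of_nonempty (Finset.card_pos.mp (by omega)) fun t ht => hc t ht
  rw [h, Finset.sum_const, smul_eq_mul, Finset.mul_sum] at this
  exact lt_irrefl _ this

lemma exists_sub_min (hp : p ≠ 0) {Ts : Finset GaussianInt}
    (hrep : ∀ u : GaussianInt, ∃ t ∈ Ts, p ∣ u - t)
    (hsep : ∀ t ∈ Ts, ∀ t' ∈ Ts, p ∣ t - t' → t = t')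
    (hTs : 2 ≤ Ts.card) (m : ℕ) (r : GaussianInt) :
    ∃ t ∈ Ts, Ts.card * cnt C p (m + 1) (r + p ^ m * t) ≤ cnt C p m r := by
  have h := cnt_partition (C := C) hp hrep hsep m r
  by_contra hc
  push_neg at hc
  have : ∑ t ∈ Ts, cnt C p m r < ∑ t ∈ Ts, Ts.card * cnt C p (m + 1) (r + p ^ m * t) :=
    Finset.sum_lt_sum_of_nonempty (Finset.card_pos.mp (by omega)) fun t ht => hc t ht
  rw [h, Finset.sum_const, smul_eq_mul, Finset.mul_sum] at this
  exact lt_irrefl _ this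

def hfun (q : ℕ) (S : ℕ) : ℕ :=
  if h : 2 ≤ q ∧ 0 < S then S + hfun q (S / q) else 0
termination_by S
decreasing_by exact Nat.div_lt_self h.2 (by omega)

def gfun (q : ℕ) (R : ℕ) : ℕ :=
  if h : 2 ≤ q ∧ 2 ≤ R then (R - 1) + gfun q ((R + q - 1) / q) else 0
termination_by R
decreasing_by
  rw [Nat.div_lt_iff_lt_mul (by omega : 0 < q)]
  have h1 : 2 * q ≤ R * q := Nat.mul_le_mul_right q (by omega)
  have h2 : R * 2 ≤ R * q := Nat.mul_le_mul_left R (by omega)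
  omega

lemma hfun_zero (q : ℕ) : hfun q 0 = 0 := by rw [hfun]; simp

lemma hfun_eq {q S : ℕ} (hq : 2 ≤ q) (hS : 0 < S) : hfun q S = S + hfun q (S / q) := by
  rw [hfun]; simp [hq, hS]

lemma gfun_le_one {q R : ℕ} (hR : R ≤ 1) : gfun q R = 0 := by
  rw [gfun]; simp; omega

lemma gfun_eq {q R : ℕ} (hq : 2 ≤ q) (hR : 2 ≤ R) :
    gfun q R = (R - 1) + gfun q ((R + q - 1) / q) := by
  rw [gfun]; simp [hq, hR]

lemma hfun_mono {q : ℕ} (hq : 2 ≤ q) : Monotone (hfun q) := by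
  intro S S' h
  induction S' using Nat.strong_induction_on generalizing S with
  | _ S' ih =>
    rcases Nat.eq_zero_or_pos S with rfl | hS
    · simp [hfun_zero]
    have hS' : 0 < S' := lt_of_lt_of_le hS h
    rw [hfun_eq hq hS, hfun_eq hq hS']
    have := ih (S' / q) (Nat.div_lt_self hS' (by omega)) (S := S / q)
      (Nat.div_le_div_right h)
    omega

lemma gfun_mono {q : ℕ} (hq : 2 ≤ q) : Monotone (gfun q) := by
  intro R R' h
  induction R' using Nat.strong_induction_on generalizing R with
  | _ R' ih =>
    rcases le_or_gt R 1 with hR | hR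
    · simp [gfun_le_one hR]
    have hR' : 2 ≤ R' := le_trans hR h
    rw [gfun_eq hq hR, gfun_eq hq hR']
    have hlt : (R' + q - 1) / q < R' := by
      rw [Nat.div_lt_iff_lt_mul (by omega : 0 < q)]
      have h1 : 2 * q ≤ R' * q := Nat.mul_le_mul_right q (by omega)
      have h2 : R' * 2 ≤ R' * q := Nat.mul_le_mul_left R' (by omega)
      omega
    have := ih ((R' + q - 1) / q) hlt (R := (R + q - 1) / q)
      (Nat.div_le_div_right (by omega))
    omega

lemma hfun_le_gfun {q : ℕ} (hq : 2 ≤ q) : ∀ a, 1 ≤ a → hfun q (a - 1) ≤ gfun q a := by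
  intro a
  induction a using Nat.strong_induction_on with
  | _ a ih =>
    intro ha
    rcases le_or_gt a 1 with h1 | h1
    · have : a = 1 := by omega
      simp [this, hfun_zero, gfun_le_one]
    · rw [gfun_eq hq h1]
      have hrw : (a + q - 1) / q = (a - 1) / q + 1 := by
        have : a + q - 1 = (a - 1) + q := by omega
        rw [this, Nat.add_div_right _ (by omega : 0 < q)]
      rw [hfun_eq hq (by omega : 0 < a - 1)]
      have hlt : (a - 1) / q + 1 < a := by
        have := Nat.div_lt_self (by omega : 0 < a - 1) (by omega : 1 < q)
        omega
      have := ih ((a - 1) / q + 1) hlt (Nat.succ_le_succ (Nat.zero_le _))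
      simp only [Nat.add_sub_cancel] at this
      rw [hrw]
      omega

lemma hfun_lt_gfun {q R S : ℕ} (hq : 2 ≤ q) (hRS : S + 2 ≤ R) :
    hfun q S + 1 ≤ gfun q R := by
  have h1 : hfun q S ≤ hfun q (R - 2) := hfun_mono hq (by omega)
  suffices h2 : hfun q (R - 2) + 1 ≤ gfun q R by omega
  rw [gfun_eq hq (by omega)]
  rcases le_or_gt R 2 with h3 | h3
  · have : R = 2 := by omega
    subst this; simp [hfun_zero]
  · rw [hfun_eq hq (by omega : 0 < R - 2)]
    have hrw : (R + q - 1) / q = (R - 1) / q + 1 := by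
      have : R + q - 1 = (R - 1) + q := by omega
      rw [this, Nat.add_div_right _ (by omega : 0 < q)]
    have hge := hfun_le_gfun hq ((R - 1) / q + 1) (Nat.succ_le_succ (Nat.zero_le _))
    simp only [Nat.add_sub_cancel] at hge
    have hmono : hfun q ((R - 2)/q) ≤ hfun q ((R - 1) / q) :=
      hfun_mono hq (Nat.div_le_div_right (by omega))
    rw [hrw]
    omega



lemma emult_prod_erase {C : Finset GaussianInt} {p : GaussianInt} (hp : Prime p)
    {c w : GaussianInt} (hw : ∀ d ∈ C.erase c, w ≠ d) {L : ℕ}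
    (hL : ∀ d ∈ C.erase c, ¬ p ^ L ∣ w - d) :
    emultiplicity p (∏ d ∈ C.erase c, (w - d)) =
      ((∑ m ∈ Finset.Icc 1 L, ((C.erase c).filter fun x => p ^ m ∣ x - w).card : ℕ) : ℕ∞) := by
  rw [Finset.emultiplicity_prod hp]
  have hstep : ∀ d ∈ C.erase c, emultiplicity p (w - d) =
      ((((Finset.Icc 1 L).filter fun m => p ^ m ∣ w - d).card : ℕ) : ℕ∞) := fun d hd =>
    emult_eq_card_filter hp (sub_ne_zero.mpr (hw d hd)) (hL d hd)
  rw [Finset.sum_congr rfl hstep, ← Nat.cast_sum, Nat.cast_inj]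
  simp only [Finset.card_filter]
  rw [Finset.sum_comm]
  refine Finset.sum_congr rfl fun m _ => Finset.sum_congr rfl fun d _ => ?_
  congr 1
  simp only [eq_iff_iff]
  exact ⟨fun h => dvd_sub_comm.mp h, fun h => dvd_sub_comm.mp h⟩

lemma exists_pow_not_dvd {p : GaussianInt} (hp : Prime p) (S : Finset GaussianInt)
    (h0 : ∀ e ∈ S, e ≠ 0) : ∃ L : ℕ, 1 ≤ L ∧ ∀ e ∈ S, ¬ p ^ L ∣ e := by
  refine ⟨(S.sup fun e => multiplicity p e) + 1, by omega, fun e he => ?_⟩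
  have hfin : FiniteMultiplicity p e :=
    FiniteMultiplicity.of_not_isUnit hp.not_unit (h0 e he)
  rw [← hfin.multiplicity_lt_iff_not_dvd]
  have : multiplicity p e ≤ S.sup fun e => multiplicity p e := Finset.le_sup he
  omega


section Claims

variable {C : Finset GaussianInt} {p : GaussianInt}

lemma claimZ (hp : Prime p) {Ts : Finset GaussianInt}
    (hrep : ∀ u : GaussianInt, ∃ t ∈ Ts, p ∣ u - t)
    (hsep : ∀ t ∈ Ts, ∀ t' ∈ Ts, p ∣ t - t' → t = t')
    (hTs : 2 ≤ Ts.card) :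
    ∀ S k s, cnt C p k s = S →
      ∃ z : GaussianInt, p ^ k ∣ z - s ∧
        ∀ L, ∑ m ∈ Finset.Icc k L, cnt C p m z ≤ hfun Ts.card S := by
  intro S
  induction S using Nat.strong_induction_on with
  | _ S ih =>
    intro k s hS
    rcases Nat.eq_zero_or_pos S with rfl | hpos
    · refine ⟨s, by simp, fun L => ?_⟩
      rw [hfun_zero]
      rw [Finset.sum_eq_zero]
      intro m hm
      rw [Finset.mem_Icc] at hm
      have := cnt_anti (C := C) (p := p) hm.1 s
      omega
    · obtain ⟨t, htTs, hmin⟩ := exists_sub_min (C := C) hp.ne_zero hrep hsep hTs k s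
      set s' := s + p ^ k * t with hs'
      set S' := cnt C p (k + 1) s' with hS'
      have hS'lt : S' < S := by
        have h2 : 2 * S' ≤ Ts.card * S' := Nat.mul_le_mul_right _ (by omega)
        rw [hS] at hmin
        omega
      obtain ⟨z, hz1, hz2⟩ := ih S' hS'lt (k + 1) s' rfl
      have hzs : p ^ k ∣ z - s := by
        refine dvd_sub_trans (y := s') ((pow_dvd_pow p (Nat.le_succ k)).trans hz1) ?_
        simp [hs']
      refine ⟨z, hzs, fun L => ?_⟩
      rcases lt_or_ge L k with hL | hL
      · rw [Finset.Icc_eq_empty (by omega)]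
        simp
      · have hsplit : Finset.Icc k L = (Finset.Icc (k+1) L).cons k (by simp) := by
          ext x
          simp only [Finset.mem_Icc, Finset.mem_cons]
          omega
        rw [hsplit, Finset.sum_cons]
        have hcz : cnt C p k z = S := by
          rw [← hS]
          exact (cnt_congr hzs).symm
        have hdiv : S' ≤ S / Ts.card := by
          rw [Nat.le_div_iff_mul_le (by omega : 0 < Ts.card), mul_comm]
          rw [hS] at hmin
          exact hmin
        have hmono := hfun_mono (q := Ts.card) (by omega) hdiv
        have hrec := hfun_eq (q := Ts.card) (S := S) (by omega) hpos
        have := hz2 L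
        omega

lemma claimD (hp : Prime p) {Ts : Finset GaussianInt}
    (hrep : ∀ u : GaussianInt, ∃ t ∈ Ts, p ∣ u - t)
    (hsep : ∀ t ∈ Ts, ∀ t' ∈ Ts, p ∣ t - t' → t = t')
    (hTs : 2 ≤ Ts.card) {L0 : ℕ}
    (hL0 : ∀ x ∈ C, ∀ y ∈ C, x ≠ y → ¬ p ^ L0 ∣ x - y) :
    ∀ j k r, L0 - k ≤ j → 1 ≤ cnt C p k r →
      ∃ c ∈ C, p ^ k ∣ c - r ∧
        ∀ L, L0 ≤ L → gfun Ts.card (cnt C p k r) ≤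
          ∑ m ∈ Finset.Icc k L, (cnt C p m c - 1) := by
  intro j
  induction j with
  | zero =>
    intro k r hk hpos
    have hle : cnt C p k r ≤ 1 := cnt_le_one_of_sep hL0 (by omega)
    obtain ⟨c, hc⟩ := Finset.card_pos.mp (by simpa [cnt] using hpos)
    rw [Finset.mem_filter] at hc
    refine ⟨c, hc.1, hc.2, fun L _ => ?_⟩
    rw [gfun_le_one (by omega)]
    exact Nat.zero_le _
  | succ j ihj =>
    intro k r hk hpos
    rcases le_or_gt L0 k with hk0 | hk0
    · have hle : cnt C p k r ≤ 1 := cnt_le_one_of_sep hL0 hk0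
      obtain ⟨c, hc⟩ := Finset.card_pos.mp (by simpa [cnt] using hpos)
      rw [Finset.mem_filter] at hc
      refine ⟨c, hc.1, hc.2, fun L _ => ?_⟩
      rw [gfun_le_one (by omega)]
      exact Nat.zero_le _
    rcases le_or_gt (cnt C p k r) 1 with hle | hR
    · obtain ⟨c, hc⟩ := Finset.card_pos.mp (by simpa [cnt] using hpos)
      rw [Finset.mem_filter] at hc
      refine ⟨c, hc.1, hc.2, fun L _ => ?_⟩
      rw [gfun_le_one (by omega)]
      exact Nat.zero_le _
    · obtain ⟨t, htTs, hmax⟩ := exists_sub_max (C := C) hp.ne_zero hrep hsep hTs k r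
      set r' := r + p ^ k * t with hr'
      set R := cnt C p k r with hR2
      set R' := cnt C p (k + 1) r' with hR'
      have hR'1 : 1 ≤ R' := by
        rcases Nat.eq_zero_or_pos R' with h0 | h; · rw [h0] at hmax; omega
        · exact h
      obtain ⟨c, hcC, hcr', hsum⟩ := ihj (k + 1) r' (by omega) hR'1
      rw [← hR'] at hsum
      have hcr : p ^ k ∣ c - r := by
        refine dvd_sub_trans (y := r') ((pow_dvd_pow p (Nat.le_succ k)).trans hcr') ?_
        simp [hr']
      refine ⟨c, hcC, hcr, fun L hL => ?_⟩
      have hkL : k ≤ L := by omega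
      have hsplit : Finset.Icc k L = (Finset.Icc (k+1) L).cons k (by simp) := by
        ext x
        simp only [Finset.mem_Icc, Finset.mem_cons]
        omega
      rw [hsplit, Finset.sum_cons]
      have hck : cnt C p k c = R := by
        rw [hR2]
        exact (cnt_congr hcr).symm
      have hceil : (R + Ts.card - 1) / Ts.card ≤ R' := by
        rw [Nat.div_le_iff_le_mul_add_pred (by omega : 0 < Ts.card)]
        have : R ≤ Ts.card * R' := hmax
        omega
      have hmono := gfun_mono (q := Ts.card) (by omega) hceil
      have hrec := gfun_eq (q := Ts.card) (R := R) (by omega) hR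
      have := hsum L hL
      omega

end Claims


lemma residueSet_ncard (C : Finset GaussianInt) (α r : GaussianInt) :
    (ResidueSet C α r).ncard = (C.filter fun x => α ∣ x - r).card := by
  have : ResidueSet C α r = ((C.filter fun x => α ∣ x - r) : Finset GaussianInt) := by
    ext x
    simp [ResidueSet]
  rw [this, Set.ncard_coe_finset]

lemma adu_iff {C : Finset GaussianInt} {p : GaussianInt} {k : ℕ} :
    AlmostUnifDist C (p ^ k) ↔ ∀ r s, cnt C p k r ≤ cnt C p k s + 1 := by
  constructor
  · intro h r s
    rcases h r s with h1 | h1 | h1 <;>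
      rw [residueSet_ncard, residueSet_ncard] at h1 <;>
      simp only [cnt] <;> omega
  · intro h r s
    have h1 := h r s
    have h2 := h s r
    simp only [cnt] at h1 h2
    rw [residueSet_ncard, residueSet_ncard]
    omega

lemma dvd_of_adu {C : Finset GaussianInt}
    (hADU : ∀ p : GaussianInt, Prime p → ∀ k : ℕ, 0 < k → AlmostUnifDist C (p ^ k)) :
    ∀ c ∈ C, ∀ z, LD C c ∣ LP C c z := by
  intro c hc z
  by_cases hzC : z ∈ C
  · rcases eq_or_ne z c with rfl | hne
    · exact dvd_of_eq (by rw [LD, LP])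
    · have : LP C c z = 0 :=
        Finset.prod_eq_zero (Finset.mem_erase.mpr ⟨hne, hzC⟩) (sub_self z)
      rw [this]; exact dvd_zero _
  · have hLD : LD C c ≠ 0 := LD_ne_zero
    have hLP : LP C c z ≠ 0 := by
      rw [LP, Finset.prod_ne_zero_iff]
      intro d hd
      exact sub_ne_zero.mpr fun h => hzC (by rw [h]; exact Finset.mem_of_mem_erase hd)
    apply dvd_of_forall_emultiplicity_le hLD hLP
    intro q hq
    have hS0 : ∀ e ∈ (((C.erase c).image fun d => c - d) ∪ ((C.erase c).image fun d => z - d)),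
        e ≠ 0 := by
      intro e he
      rw [Finset.mem_union] at he
      rcases he with he | he <;> rw [Finset.mem_image] at he <;> obtain ⟨d, hd, rfl⟩ := he
      · exact sub_ne_zero.mpr (Finset.ne_of_mem_erase hd).symm
      · exact sub_ne_zero.mpr fun h => hzC (by rw [h]; exact Finset.mem_of_mem_erase hd)
    obtain ⟨L, hL1, hLprop⟩ := exists_pow_not_dvd hq
      (((C.erase c).image fun d => c - d) ∪ ((C.erase c).image fun d => z - d)) hS0
    have hec : emultiplicity q (LD C c) =
        ((∑ m ∈ Finset.Icc 1 L, ((C.erase c).filter fun x => q ^ m ∣ x - c).card : ℕ) : ℕ∞) := by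
      rw [LD]
      exact emult_prod_erase hq (fun d hd => (Finset.ne_of_mem_erase hd).symm)
        (fun d hd => hLprop _ (Finset.mem_union_left _ (Finset.mem_image_of_mem _ hd)))
    have hez : emultiplicity q (LP C c z) =
        ((∑ m ∈ Finset.Icc 1 L, ((C.erase c).filter fun x => q ^ m ∣ x - z).card : ℕ) : ℕ∞) := by
      rw [LP]
      exact emult_prod_erase hq (fun d hd h => hzC (by rw [h]; exact Finset.mem_of_mem_erase hd))
        (fun d hd => hLprop _ (Finset.mem_union_right _ (Finset.mem_image_of_mem _ hd)))
    rw [hec, hez, Nat.cast_le]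
    apply Finset.sum_le_sum
    intro m hm
    rw [Finset.mem_Icc] at hm
    by_cases hd : q ^ m ∣ z - c
    · have e1 := card_erase_filter_eq_of_dvd (C := C) hc hd
      have e2 := card_erase_filter (C := C) (p := q) (k := m) hc
      omega
    · have e1 := card_erase_filter_eq_of_not_dvd (C := C) (c := c) hd
      have e2 := card_erase_filter (C := C) (p := q) (k := m) hc
      have e3 := adu_iff.mp (hADU q hq m (by omega)) c z
      omega

lemma reduce_step {C : Finset GaussianInt} {p : GaussianInt} (hp : Prime p)
    {Ts : Finset GaussianInt}
    (hrep : ∀ u : GaussianInt, ∃ t ∈ Ts, p ∣ u - t)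
    (hsep : ∀ t ∈ Ts, ∀ t' ∈ Ts, p ∣ t - t' → t = t')
    (hTs : 2 ≤ Ts.card) (k : ℕ)
    (hprev : ∀ r s, cnt C p k r ≤ cnt C p k s + 1)
    (hintra : ∀ r s, p ^ k ∣ r - s → cnt C p (k+1) r ≤ cnt C p (k+1) s + 1) :
    ∀ r s, cnt C p (k+1) r ≤ cnt C p (k+1) s + 1 := by
  intro r s
  obtain ⟨t0, ht0Ts, ht0⟩ := hrep 0
  have hpt0 : p ∣ t0 := by rwa [zero_sub, dvd_neg] at ht0
  have hspec : ∀ w : GaussianInt, cnt C p (k+1) (w + p ^ k * t0) = cnt C p (k+1) w := by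
    intro w
    refine cnt_congr ?_
    have h1 : w - (w + p ^ k * t0) = -(p ^ k * t0) := by ring
    rw [h1, dvd_neg, pow_succ]
    exact mul_dvd_mul_left _ hpt0
  have hpartr := cnt_partition (C := C) hp.ne_zero hrep hsep k r
  have hparts := cnt_partition (C := C) hp.ne_zero hrep hsep k s
  rw [← Finset.add_sum_erase _ _ ht0Ts, hspec r] at hpartr
  rw [← Finset.add_sum_erase _ _ ht0Ts, hspec s] at hparts
  set A := cnt C p (k+1) r with hA
  set B := cnt C p (k+1) s with hB
  set Er := ∑ t ∈ Ts.erase t0, cnt C p (k+1) (r + p ^ k * t) with hEr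
  set Es := ∑ t ∈ Ts.erase t0, cnt C p (k+1) (s + p ^ k * t) with hEs
  have hcard : (Ts.erase t0).card = Ts.card - 1 := Finset.card_erase_of_mem ht0Ts
  have hr1 : (Ts.card - 1) * A ≤ Er + (Ts.card - 1) := by
    have h1 : ∀ t ∈ Ts.erase t0, A ≤ cnt C p (k+1) (r + p ^ k * t) + 1 := by
      intro t ht
      apply hintra
      have : r - (r + p ^ k * t) = -(p ^ k * t) := by ring
      rw [this, dvd_neg]
      exact Dvd.intro t rfl
    calc (Ts.card - 1) * A = ∑ _t ∈ Ts.erase t0, A := by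
          rw [Finset.sum_const, smul_eq_mul, hcard]
      _ ≤ ∑ t ∈ Ts.erase t0, (cnt C p (k+1) (r + p ^ k * t) + 1) := Finset.sum_le_sum h1
      _ = Er + (Ts.card - 1) := by rw [Finset.sum_add_distrib, Finset.sum_const, smul_eq_mul,
            mul_one, hcard]
  have hs1 : Es ≤ (Ts.card - 1) * (B + 1) := by
    have h1 : ∀ t ∈ Ts.erase t0, cnt C p (k+1) (s + p ^ k * t) ≤ B + 1 := by
      intro t ht
      apply hintra
      have : (s + p ^ k * t) - s = p ^ k * t := by ring
      rw [this]
      exact Dvd.intro t rfl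
    calc Es ≤ ∑ _t ∈ Ts.erase t0, (B + 1) := Finset.sum_le_sum h1
      _ = (Ts.card - 1) * (B + 1) := by rw [Finset.sum_const, smul_eq_mul, hcard]
  have hprev1 := hprev r s
  rw [hpartr, hparts] at hprev1
  by_contra hcon
  push_neg at hcon
  have h4 : (Ts.card - 1) * (B + 2) ≤ (Ts.card - 1) * A :=
    Nat.mul_le_mul_left _ (by omega)
  have h5 : (Ts.card - 1) * (B + 2) = (Ts.card - 1) * (B + 1) + (Ts.card - 1) := by ring
  omega

lemma adu_of_dvd {C : Finset GaussianInt} {p : GaussianInt} (hp : Prime p)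
    (hdvd : ∀ c ∈ C, ∀ z, LD C c ∣ LP C c z) :
    ∀ k : ℕ, ∀ r s, cnt C p k r ≤ cnt C p k s + 1 := by
  obtain ⟨Ts, hTs, hrep, hsep⟩ := exists_transversal hp
  intro k
  induction k with
  | zero =>
    intro r s
    have h0 : ∀ w : GaussianInt, cnt C p 0 w = C.card := by
      intro w
      rw [cnt]
      congr 1
      apply Finset.filter_true_of_mem
      intro x _
      rw [pow_zero]
      exact one_dvd _
    rw [h0, h0]
    omega
  | succ k ihk =>
    apply reduce_step hp hrep hsep hTs k ihk
    intro r s hrs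
    by_contra hcon
    push_neg at hcon
    have hS0 : ∀ e ∈ ((C ×ˢ C).filter fun a => a.1 ≠ a.2).image fun a => a.1 - a.2, e ≠ 0 := by
      intro e he
      rw [Finset.mem_image] at he
      obtain ⟨a, ha, rfl⟩ := he
      rw [Finset.mem_filter] at ha
      exact sub_ne_zero.mpr ha.2
    obtain ⟨L0, hL01, hL0prop⟩ := exists_pow_not_dvd hp
      (((C ×ˢ C).filter fun a => a.1 ≠ a.2).image fun a => a.1 - a.2) hS0
    have hL0 : ∀ x ∈ C, ∀ y ∈ C, x ≠ y → ¬ p ^ L0 ∣ x - y := by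
      intro x hx y hy hne
      have hmem : (x, y) ∈ (C ×ˢ C).filter fun a => a.1 ≠ a.2 :=
        Finset.mem_filter.mpr ⟨Finset.mem_product.mpr ⟨hx, hy⟩, hne⟩
      exact hL0prop _ (Finset.mem_image_of_mem _ hmem)
    have hkL0 : k + 1 < L0 := by
      by_contra h
      push_neg at h
      have h1 := cnt_le_one_of_sep (r := r) hL0 h
      omega
    obtain ⟨c, hcC, hcr, hD⟩ := claimD hp hrep hsep hTs hL0 L0 (k+1) r (by omega) (by omega)
    obtain ⟨z, hzs, hZ⟩ := claimZ hp hrep hsep hTs (cnt C p (k+1) s) (k+1) s rfl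
    set S := cnt C p (k+1) s with hS
    set R := cnt C p (k+1) r with hR
    have hzC : z ∉ C := by
      intro hzC
      have h1 := hZ (k + 1 + hfun Ts.card S)
      have h2 : ∀ m ∈ Finset.Icc (k+1) (k+1+hfun Ts.card S), 1 ≤ cnt C p m z :=
        fun m _ => one_le_cnt hzC
      have h3 : (Finset.Icc (k+1) (k+1+hfun Ts.card S)).card ≤
          ∑ m ∈ Finset.Icc (k+1) (k+1+hfun Ts.card S), cnt C p m z := by
        calc (Finset.Icc (k+1) (k+1+hfun Ts.card S)).card
            = ∑ _m ∈ Finset.Icc (k+1) (k+1+hfun Ts.card S), 1 := by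
              rw [Finset.sum_const, smul_eq_mul, mul_one]
          _ ≤ _ := Finset.sum_le_sum h2
      rw [Nat.card_Icc] at h3
      omega
    have hS1 : ∀ e ∈ (((C.erase c).image fun d => c - d) ∪ ((C.erase c).image fun d => z - d)),
        e ≠ 0 := by
      intro e he
      rw [Finset.mem_union] at he
      rcases he with he | he <;> rw [Finset.mem_image] at he <;> obtain ⟨d, hd, rfl⟩ := he
      · exact sub_ne_zero.mpr (Finset.ne_of_mem_erase hd).symm
      · exact sub_ne_zero.mpr fun h => hzC (by rw [h]; exact Finset.mem_of_mem_erase hd)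
    obtain ⟨L1, hL11, hL1prop⟩ := exists_pow_not_dvd hp
      (((C.erase c).image fun d => c - d) ∪ ((C.erase c).image fun d => z - d)) hS1
    set L := max L0 L1 with hLdef
    have hLnot : ∀ e, ¬ p ^ L1 ∣ e → ¬ p ^ L ∣ e := fun e h hdd =>
      h ((pow_dvd_pow p (le_max_right L0 L1)).trans hdd)
    have hec : emultiplicity p (LD C c) =
        ((∑ m ∈ Finset.Icc 1 L, ((C.erase c).filter fun x => p ^ m ∣ x - c).card : ℕ) : ℕ∞) := by
      rw [LD]
      exact emult_prod_erase hp (fun d hd => (Finset.ne_of_mem_erase hd).symm)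
        (fun d hd => hLnot _ (hL1prop _ (Finset.mem_union_left _ (Finset.mem_image_of_mem _ hd))))
    have hez : emultiplicity p (LP C c z) =
        ((∑ m ∈ Finset.Icc 1 L, ((C.erase c).filter fun x => p ^ m ∣ x - z).card : ℕ) : ℕ∞) := by
      rw [LP]
      exact emult_prod_erase hp (fun d hd h => hzC (by rw [h]; exact Finset.mem_of_mem_erase hd))
        (fun d hd => hLnot _ (hL1prop _ (Finset.mem_union_right _ (Finset.mem_image_of_mem _ hd))))
    have hkL : k + 1 ≤ L := le_trans (by omega) (le_max_left L0 L1)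
    have hU : Finset.Icc 1 L = Finset.Icc 1 k ∪ Finset.Icc (k+1) L := by
      ext x
      simp only [Finset.mem_union, Finset.mem_Icc]
      omega
    have hdisj : Disjoint (Finset.Icc 1 k) (Finset.Icc (k+1) L) := by
      rw [Finset.disjoint_left]
      intro x hx1 hx2
      rw [Finset.mem_Icc] at hx1 hx2
      omega
    have hzc : ∀ m, m ≤ k → p ^ m ∣ z - c := by
      intro m hm
      have h1 : p ^ m ∣ z - s := (pow_dvd_pow p (by omega : m ≤ k + 1)).trans hzs
      have h2 : p ^ m ∣ s - r := by
        have := (pow_dvd_pow p hm).trans hrs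
        exact dvd_sub_comm.mp this
      have h3 : p ^ m ∣ r - c := by
        have := (pow_dvd_pow p (by omega : m ≤ k + 1)).trans hcr
        exact dvd_sub_comm.mp this
      exact dvd_sub_trans (dvd_sub_trans h1 h2) h3
    have hlow : ∀ m ∈ Finset.Icc 1 k,
        ((C.erase c).filter fun x => p ^ m ∣ x - z).card =
        ((C.erase c).filter fun x => p ^ m ∣ x - c).card := by
      intro m hm
      rw [Finset.mem_Icc] at hm
      have e1 := card_erase_filter_eq_of_dvd (C := C) hcC (hzc m hm.2)
      have e2 := card_erase_filter (C := C) (p := p) (k := m) hcC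
      omega
    have hhighP : ∑ m ∈ Finset.Icc (k+1) L, ((C.erase c).filter fun x => p ^ m ∣ x - z).card ≤
        hfun Ts.card S := by
      calc ∑ m ∈ Finset.Icc (k+1) L, ((C.erase c).filter fun x => p ^ m ∣ x - z).card
          ≤ ∑ m ∈ Finset.Icc (k+1) L, cnt C p m z :=
            Finset.sum_le_sum fun m _ => card_erase_filter_le
        _ ≤ hfun Ts.card S := hZ L
    have hhighD : gfun Ts.card R ≤
        ∑ m ∈ Finset.Icc (k+1) L, ((C.erase c).filter fun x => p ^ m ∣ x - c).card := by
      have h1 := hD L (le_max_left L0 L1)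
      refine le_trans h1 (le_of_eq (Finset.sum_congr rfl fun m _ => ?_))
      have e2 := card_erase_filter (C := C) (p := p) (k := m) hcC
      omega
    have hgh : hfun Ts.card S + 1 ≤ gfun Ts.card R := hfun_lt_gfun (by omega) (by omega)
    have hlt : (∑ m ∈ Finset.Icc 1 L, ((C.erase c).filter fun x => p ^ m ∣ x - z).card) <
        (∑ m ∈ Finset.Icc 1 L, ((C.erase c).filter fun x => p ^ m ∣ x - c).card) := by
      rw [hU, Finset.sum_union hdisj, Finset.sum_union hdisj,
        Finset.sum_congr rfl hlow]
      omega
    have hle := emultiplicity_le_emultiplicity_of_dvd_right (hdvd c hcC z) (a := p)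
    rw [hec, hez, Nat.cast_le] at hle
    omega

/-- A set `C ⊆ ℤ[i]` of cardinality `n + 1` is `n`-universal if and only if it is
almost uniformly distributed modulo `p ^ k` for every prime `p` of `ℤ[i]` and every
positive integer `k`. -/
theorem universal_iff_almostUnifDist (n : ℕ) (C : Finset GaussianInt)
    (hcard : C.card = n + 1) :
    IsNUniversal n (C : Set GaussianInt) ↔
      ∀ p : GaussianInt, Prime p → ∀ k : ℕ, 0 < k → AlmostUnifDist C (p ^ k) := by
  constructor
  · intro hU p hp k hk
    exact adu_iff.mpr (adu_of_dvd hp ((universal_iff_dvd n C hcard).mp hU) k)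
  · intro hADU
    exact (universal_iff_dvd n C hcard).mpr (dvd_of_adu hADU)
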